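/- Let (S_t) be a Markov chain with killing, and let M be a set of states such that P^x(τ > C) ≤ e^{−C/(log C)²} for every x ∉ M (survival probability over C steps from non-M states is small). Define stopping times ζ_0 = 0 and ζ_i = inf{t > ζ_{i−1} + C : S_t ∉ M}. Then for any j ≥ 1, P(ζ_j ≤ m, τ > m) ≤ (e^{−C/(log C)²})^{j−1}, where τ is the killing time. -/

import Mathlib

open scoped Classical

noncomputable def pathProb {V : Type*} (p : V → V → ℝ) (x : V) {m : ℕ} (ω : Fin m → V) : ℝ :=
  ∏ i : Fin m, p (if (i : ℕ) = 0 then x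
    else ω ⟨(i : ℕ) - 1, lt_of_le_of_lt (Nat.sub_le _ _) i.isLt⟩) (ω i)

def traj {V : Type*} (x : V) {m : ℕ} (ω : Fin m → V) (t : ℕ) : V :=
  if h : 1 ≤ t ∧ t ≤ m then ω ⟨t - 1, by omega⟩ else x

noncomputable def walkP {V : Type*} [Countable V] (p : V → V → ℝ) (x : V) (m : ℕ)
    (E : (Fin m → V) → Prop) : ℝ :=
  ∑' ω : Fin m → V, if E ω then pathProb p x ω else 0

namespace Stmt12

open ENNReal

variable {V : Type*}

/-- prefix of a path -/
def pref {m n : ℕ} (h : n ≤ m) (ω : Fin m → V) : Fin n → V :=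
  fun i => ω ⟨i, lt_of_lt_of_le i.2 h⟩

/-- suffix of a path -/
def suff {m n : ℕ} (h : n ≤ m) (ω : Fin m → V) : Fin (m - n) → V :=
  fun i => ω ⟨n + i, by have := i.2; omega⟩

/-- concatenation -/
def glue {m n : ℕ} (_h : n ≤ m) (ω₁ : Fin n → V) (ω₂ : Fin (m - n) → V) : Fin m → V :=
  fun i => if h' : (i : ℕ) < n then ω₁ ⟨i, h'⟩ else ω₂ ⟨(i : ℕ) - n, by have := i.2; omega⟩


lemma app_congr {n : ℕ} (ω : Fin n → V) {a b : ℕ} (ha : a < n) (hb : b < n) (h : a = b) :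
    ω ⟨a, ha⟩ = ω ⟨b, hb⟩ := by subst h; rfl

lemma traj_glue_le {m n : ℕ} (h : n ≤ m) (x : V) (ω₁ : Fin n → V) (ω₂ : Fin (m - n) → V)
    {t : ℕ} (ht : t ≤ n) : traj x (glue h ω₁ ω₂) t = traj x ω₁ t := by
  unfold traj glue
  split_ifs <;>
    first
      | rfl
      | (exact app_congr _ _ _ (by (try simp only [Fin.val_mk] at *); omega))
      | (exfalso; (try simp only [Fin.val_mk] at *); omega)

lemma traj_glue_ge {m n : ℕ} (h : n ≤ m) (x : V) (ω₁ : Fin n → V) (ω₂ : Fin (m - n) → V)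
    {t : ℕ} (ht : t ≤ m - n) :
    traj x (glue h ω₁ ω₂) (n + t) = traj (traj x ω₁ n) ω₂ t := by
  unfold traj glue
  split_ifs <;>
    first
      | rfl
      | (exact app_congr _ _ _ (by (try simp only [Fin.val_mk] at *); omega))
      | (exfalso; (try simp only [Fin.val_mk] at *); omega)

lemma traj_pref {m n : ℕ} (h : n ≤ m) (x : V) (ω : Fin m → V) {t : ℕ} (ht : t ≤ n) :
    traj x (pref h ω) t = traj x ω t := by
  unfold traj pref
  rcases Nat.eq_zero_or_pos t with h0 | h1
  · subst h0; simp
  · rw [dif_pos ⟨h1, ht⟩, dif_pos ⟨h1, le_trans ht h⟩]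

lemma pref_glue {m n : ℕ} (h : n ≤ m) (ω₁ : Fin n → V) (ω₂ : Fin (m - n) → V) :
    pref h (glue h ω₁ ω₂) = ω₁ := by
  funext i
  unfold pref glue
  rw [dif_pos (show ((⟨i, lt_of_lt_of_le i.2 h⟩ : Fin m) : ℕ) < n from i.2)]

lemma suff_glue {m n : ℕ} (h : n ≤ m) (ω₁ : Fin n → V) (ω₂ : Fin (m - n) → V) :
    suff h (glue h ω₁ ω₂) = ω₂ := by
  funext i
  unfold suff glue
  rw [dif_neg (by simp only [Fin.val_mk]; omega : ¬(((⟨n + (i : ℕ), by have := i.2; omega⟩ : Fin m) : ℕ) < n))]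
  exact app_congr _ _ _ (by simp only [Fin.val_mk]; omega)

lemma glue_pref_suff {m n : ℕ} (h : n ≤ m) (ω : Fin m → V) :
    glue h (pref h ω) (suff h ω) = ω := by
  funext i
  unfold pref suff glue
  by_cases h' : (i : ℕ) < n
  · rw [dif_pos h']
  · rw [dif_neg h']
    exact app_congr _ _ _ (by simp only [Fin.val_mk]; have := i.2; omega)

def pathEquiv {m n : ℕ} (h : n ≤ m) : ((Fin n → V) × (Fin (m - n) → V)) ≃ (Fin m → V) where
  toFun pr := glue h pr.1 pr.2
  invFun ω := (pref h ω, suff h ω)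
  left_inv pr := by rw [Prod.ext_iff]; exact ⟨pref_glue h pr.1 pr.2, suff_glue h pr.1 pr.2⟩
  right_inv ω := glue_pref_suff h ω

/-- weight of a path in `ℝ≥0∞` -/
noncomputable def Wt (q : V → V → ℝ≥0∞) (x : V) {m : ℕ} (ω : Fin m → V) : ℝ≥0∞ :=
  ∏ i ∈ Finset.range m, q (traj x ω i) (traj x ω (i + 1))

lemma Wt_glue (q : V → V → ℝ≥0∞) (x : V) {m n : ℕ} (h : n ≤ m) (ω₁ : Fin n → V)
    (ω₂ : Fin (m - n) → V) :
    Wt q x (glue h ω₁ ω₂) = Wt q x ω₁ * Wt q (traj x ω₁ n) ω₂ := by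
  unfold Wt
  rw [show Finset.range m = Finset.range (n + (m - n)) by rw [Nat.add_sub_cancel' h],
    Finset.prod_range_add]
  congr 1
  · refine Finset.prod_congr rfl fun i hi => ?_
    rw [Finset.mem_range] at hi
    rw [traj_glue_le h x ω₁ ω₂ (le_of_lt hi), traj_glue_le h x ω₁ ω₂ (by omega)]
  · refine Finset.prod_congr rfl fun i hi => ?_
    rw [Finset.mem_range] at hi
    rw [traj_glue_ge h x ω₁ ω₂ (le_of_lt hi), show n + i + 1 = n + (i + 1) by omega,
      traj_glue_ge h x ω₁ ω₂ (by omega)]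

noncomputable def PP (q : V → V → ℝ≥0∞) (x : V) (m : ℕ) (E : (Fin m → V) → Prop) : ℝ≥0∞ :=
  ∑' ω : Fin m → V, if E ω then Wt q x ω else 0

lemma tsum_split {m n : ℕ} (h : n ≤ m) (F : (Fin m → V) → ℝ≥0∞) :
    ∑' ω : Fin m → V, F ω =
      ∑' ω₁ : Fin n → V, ∑' ω₂ : Fin (m - n) → V, F (glue h ω₁ ω₂) := by
  rw [← Equiv.tsum_eq (pathEquiv h) F, ENNReal.tsum_prod']
  rfl

variable {q : V → V → ℝ≥0∞}

lemma mass_one (hq : ∀ x, ∑' y, q x y = 1) (x : V) :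
    ∑' ω : Fin 1 → V, Wt q x ω = 1 := by
  rw [← Equiv.tsum_eq (Equiv.funUnique (Fin 1) V).symm (fun ω : Fin 1 → V => Wt q x ω)]
  have h : ∀ y : V, Wt q x ((Equiv.funUnique (Fin 1) V).symm y) = q x y := by
    intro y
    unfold Wt
    rw [Finset.prod_range_one]
    have h1 : traj x ((Equiv.funUnique (Fin 1) V).symm y) 0 = x := by
      unfold traj; rw [dif_neg (by omega)]
    have h2 : traj x ((Equiv.funUnique (Fin 1) V).symm y) 1 = y := by
      unfold traj; rw [dif_pos ⟨le_refl 1, le_refl 1⟩]; rfl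
    rw [h1, h2]
  rw [tsum_congr h, hq x]

lemma total_mass (hq : ∀ x, ∑' y, q x y = 1) : ∀ (m : ℕ) (x : V),
    ∑' ω : Fin m → V, Wt q x ω = 1 := by
  intro m
  induction m with
  | zero =>
    intro x
    have h : ∀ ω : Fin 0 → V, Wt q x ω = 1 := by
      intro ω; unfold Wt; rw [Finset.range_zero, Finset.prod_empty]
    rw [tsum_congr h, tsum_eq_single (fun i : Fin 0 => i.elim0)]
    intro b hb
    exact absurd (funext fun i => i.elim0) hb
  | succ m ih =>
    intro x
    rw [tsum_split (show 1 ≤ m + 1 by omega) (Wt q x)]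
    have h : ∀ ω₁ : Fin 1 → V,
        (∑' ω₂ : Fin (m + 1 - 1) → V, Wt q x (glue (by omega) ω₁ ω₂)) = Wt q x ω₁ := by
      intro ω₁
      have h2 : ∀ ω₂ : Fin (m + 1 - 1) → V,
          Wt q x (glue (by omega) ω₁ ω₂) = Wt q x ω₁ * Wt q (traj x ω₁ 1) ω₂ :=
        fun ω₂ => Wt_glue q x (by omega) ω₁ ω₂
      rw [tsum_congr h2, ENNReal.tsum_mul_left,
        show (m + 1 - 1) = m from rfl, ih (traj x ω₁ 1), mul_one]
    rw [tsum_congr h, mass_one hq x]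

lemma PP_le_one (hq : ∀ x, ∑' y, q x y = 1) (x : V) (m : ℕ) (E : (Fin m → V) → Prop) :
    PP q x m E ≤ 1 := by
  rw [← total_mass hq m x]
  refine ENNReal.tsum_le_tsum fun ω => ?_
  split_ifs
  · exact le_refl _
  · exact zero_le

lemma PP_mono (x : V) (m : ℕ) {E E' : (Fin m → V) → Prop} (h : ∀ ω, E ω → E' ω) :
    PP q x m E ≤ PP q x m E' := by
  refine ENNReal.tsum_le_tsum fun ω => ?_
  by_cases hE : E ω
  · rw [if_pos hE, if_pos (h ω hE)]
  · rw [if_neg hE]; exact zero_le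

lemma PP_eq_zero (x : V) (m : ℕ) {E : (Fin m → V) → Prop} (h : ∀ ω, ¬ E ω) :
    PP q x m E = 0 := by
  unfold PP
  rw [tsum_congr (fun ω => if_neg (h ω))]
  exact tsum_zero

lemma PP_congr (x : V) (m : ℕ) {E E' : (Fin m → V) → Prop} (h : ∀ ω, E ω ↔ E' ω) :
    PP q x m E = PP q x m E' := by
  unfold PP
  exact tsum_congr fun ω => if_congr (h ω) rfl rfl

lemma PP_prefix (hq : ∀ x, ∑' y, q x y = 1) (x : V) {m n : ℕ} (h : n ≤ m)
    (A : (Fin n → V) → Prop) :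
    PP q x m (fun ω => A (pref h ω)) = PP q x n A := by
  unfold PP
  rw [tsum_split h]
  refine tsum_congr fun ω₁ => ?_
  by_cases hA : A ω₁
  · rw [if_pos hA]
    have h2 : ∀ ω₂ : Fin (m - n) → V,
        (if A (pref h (glue h ω₁ ω₂)) then Wt q x (glue h ω₁ ω₂) else 0) =
          Wt q x ω₁ * Wt q (traj x ω₁ n) ω₂ := by
      intro ω₂
      rw [pref_glue h ω₁ ω₂, if_pos hA, Wt_glue]
    rw [tsum_congr h2, ENNReal.tsum_mul_left, total_mass hq, mul_one]
  · have h2 : ∀ ω₂ : Fin (m - n) → V,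
        (if A (pref h (glue h ω₁ ω₂)) then Wt q x (glue h ω₁ ω₂) else 0) = 0 := by
      intro ω₂
      rw [pref_glue h ω₁ ω₂, if_neg hA]
    rw [tsum_congr h2, tsum_zero, if_neg hA]

lemma mkv (x : V) {m n : ℕ} (h : n ≤ m) (E : (Fin m → V) → Prop)
    (E₁ : (Fin n → V) → Prop) (E₂ : V → (Fin (m - n) → V) → Prop)
    (himp : ∀ ω₁ ω₂, E (glue h ω₁ ω₂) → E₁ ω₁ ∧ E₂ (traj x ω₁ n) ω₂)
    (c : ℝ≥0∞) (hc : ∀ y, PP q y (m - n) (E₂ y) ≤ c) :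
    PP q x m E ≤ PP q x n E₁ * c := by
  unfold PP
  rw [tsum_split h]
  calc ∑' ω₁, ∑' ω₂, (if E (glue h ω₁ ω₂) then Wt q x (glue h ω₁ ω₂) else 0)
      ≤ ∑' ω₁ : Fin n → V, (if E₁ ω₁ then Wt q x ω₁ else 0) *
          ∑' ω₂ : Fin (m - n) → V, (if E₂ (traj x ω₁ n) ω₂ then Wt q (traj x ω₁ n) ω₂ else 0) := by
        refine ENNReal.tsum_le_tsum fun ω₁ => ?_
        rw [← ENNReal.tsum_mul_left]
        refine ENNReal.tsum_le_tsum fun ω₂ => ?_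
        by_cases hE : E (glue h ω₁ ω₂)
        · obtain ⟨h1, h2⟩ := himp ω₁ ω₂ hE
          rw [if_pos hE, if_pos h1, if_pos h2, Wt_glue]
        · rw [if_neg hE]; exact zero_le
    _ ≤ ∑' ω₁ : Fin n → V, (if E₁ ω₁ then Wt q x ω₁ else 0) * c := by
        refine ENNReal.tsum_le_tsum fun ω₁ => ?_
        exact mul_le_mul' le_rfl (hc (traj x ω₁ n))
    _ = (∑' ω₁ : Fin n → V, if E₁ ω₁ then Wt q x ω₁ else 0) * c := ENNReal.tsum_mul_right

lemma union_bound (x : V) (m : ℕ) (E : (Fin m → V) → Prop) (T : Finset ℕ)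
    (Es : ℕ → (Fin m → V) → Prop) (hcov : ∀ ω, E ω → ∃ t ∈ T, Es t ω) :
    PP q x m E ≤ ∑ t ∈ T, PP q x m (Es t) := by
  unfold PP
  rw [← Summable.tsum_finsetSum (fun i _ => ENNReal.summable)]
  refine ENNReal.tsum_le_tsum fun ω => ?_
  by_cases hE : E ω
  · obtain ⟨t, ht, hEt⟩ := hcov ω hE
    rw [if_pos hE]
    calc Wt q x ω = (if Es t ω then Wt q x ω else 0) := by rw [if_pos hEt]
      _ ≤ ∑ t' ∈ T, (if Es t' ω then Wt q x ω else 0) :=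
          Finset.single_le_sum (f := fun t' => if Es t' ω then Wt q x ω else 0)
            (fun t' _ => zero_le) ht
  · rw [if_neg hE]; exact zero_le

lemma disjoint_sum (hq : ∀ x, ∑' y, q x y = 1) (x : V) (m : ℕ) (T : Finset ℕ)
    (Ds : ℕ → (Fin m → V) → Prop)
    (hdis : ∀ ω t t', t ∈ T → t' ∈ T → Ds t ω → Ds t' ω → t = t') :
    ∑ t ∈ T, PP q x m (Ds t) ≤ 1 := by
  unfold PP
  rw [← Summable.tsum_finsetSum (fun i _ => ENNReal.summable), ← total_mass hq m x]
  refine ENNReal.tsum_le_tsum fun ω => ?_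
  by_cases hex : ∃ t ∈ T, Ds t ω
  · obtain ⟨t₀, ht₀, hD⟩ := hex
    rw [Finset.sum_eq_single t₀]
    · rw [if_pos hD]
    · intro t ht hne
      rw [if_neg (fun hDt => hne (hdis ω t t₀ ht ht₀ hDt hD))]
    · intro h; exact absurd ht₀ h
  · push_neg at hex
    rw [Finset.sum_eq_zero (fun t ht => if_neg (hex t ht))]
    exact zero_le

/-- the survival-plus-`k`-exit-times event -/
def EE (O M : Set V) (C k ℓ : ℕ) (x : V) {m : ℕ} (ω : Fin m → V) : Prop :=
  (∀ t ≤ m, traj x ω t ∉ O) ∧ ∃ ts : Fin k → ℕ, (∀ a, ℓ ≤ ts a) ∧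
    (∀ a b, a < b → ts a + C < ts b) ∧ (∀ a, ts a ≤ m) ∧ (∀ a, traj x ω (ts a) ∉ M)

variable {O M : Set V} {C : ℕ} {ε : ℝ≥0∞}

lemma claim2
    (hbad : ∀ y ∉ M, PP q y C (fun ω => ∀ t ≤ C, traj y ω t ∉ O) ≤ ε)
    (k : ℕ) (ih3 : ∀ (x : V) (m : ℕ), PP q x m (EE O M C (k + 1) 0 x) ≤ ε ^ k) :
    ∀ y ∉ M, ∀ m : ℕ, PP q y m (EE O M C (k + 1) (C + 1) y) ≤ ε ^ (k + 1) := by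
  intro y hy m
  by_cases hm : C ≤ m
  · have hmkv := mkv (q := q) y hm (EE O M C (k + 1) (C + 1) y)
      (fun ω₁ => ∀ t ≤ C, traj y ω₁ t ∉ O)
      (fun z ω₂ => EE O M C (k + 1) 0 z ω₂) ?himp (ε ^ k) (fun z => ih3 z (m - C))
    · calc PP q y m (EE O M C (k + 1) (C + 1) y)
          ≤ PP q y C (fun ω₁ => ∀ t ≤ C, traj y ω₁ t ∉ O) * ε ^ k := hmkv
        _ ≤ ε * ε ^ k := mul_le_mul' (hbad y hy) le_rfl
        _ = ε ^ (k + 1) := (pow_succ' ε k).symm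
    case himp =>
      rintro ω₁ ω₂ ⟨hsurv, ts, hlb, hgap, hle, hM⟩
      refine ⟨?_, ?_, ⟨fun a => ts a - C, fun a => Nat.zero_le _, ?_, ?_, ?_⟩⟩
      · intro t ht
        rw [← traj_glue_le hm y ω₁ ω₂ ht]
        exact hsurv t (le_trans ht hm)
      · intro t ht
        rw [← traj_glue_ge hm y ω₁ ω₂ ht]
        exact hsurv (C + t) (by omega)
      · intro a b hab
        dsimp only
        have h1 := hgap a b hab
        have h2 := hlb a
        have h3 := hlb b
        omega
      · intro a
        dsimp only
        have := hle a
        omega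
      · intro a
        dsimp only
        have h1 := hlb a
        have h2 := hle a
        rw [← traj_glue_ge hm y ω₁ ω₂ (show ts a - C ≤ m - C by omega),
          show C + (ts a - C) = ts a by omega]
        exact hM a
  · refine le_trans (le_of_eq (PP_eq_zero y m ?_)) zero_le
    rintro ω ⟨-, ts, hlb, -, hle, -⟩
    have h1 := hlb 0
    have h2 := hle 0
    omega

lemma claim3 (hq : ∀ x, ∑' y, q x y = 1)
    (hbad : ∀ y ∉ M, PP q y C (fun ω => ∀ t ≤ C, traj y ω t ∉ O) ≤ ε) :
    ∀ (k : ℕ) (x : V) (m : ℕ), PP q x m (EE O M C (k + 1) 0 x) ≤ ε ^ k := by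
  intro k
  induction k with
  | zero => exact fun x m => by simpa using PP_le_one hq x m _
  | succ k ih =>
    intro x m
    set E : (Fin m → V) → Prop := EE O M C (k + 2) 0 x with hE
    -- decomposition events
    set Es : ℕ → (Fin m → V) → Prop :=
      fun t ω => (∀ s < t, traj x ω s ∈ M) ∧ traj x ω t ∉ M ∧ E ω with hEs
    set B : ℕ → ∀ {n : ℕ}, (Fin n → V) → Prop :=
      fun t {n} ω₁ => (∀ s < t, traj x ω₁ s ∈ M) ∧ traj x ω₁ t ∉ M with hB
    have step1 : PP q x m E ≤ ∑ t ∈ Finset.range (m + 1), PP q x m (Es t) := by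
      refine union_bound x m E _ Es fun ω hEω => ?_
      obtain ⟨hsurv, ts, hlb, hgap, hle, hM⟩ := id hEω
      have hex : ∃ s, traj x ω s ∉ M := ⟨ts 0, hM 0⟩
      refine ⟨Nat.find hex, ?_, ?_, Nat.find_spec hex, hEω⟩
      · rw [Finset.mem_range]
        have := Nat.find_min' hex (hM 0)
        have := hle 0
        omega
      · intro s hs
        by_contra hns
        exact absurd (Nat.find_min' hex hns) (by omega)
    have step2 : ∀ t ∈ Finset.range (m + 1),
        PP q x m (Es t) ≤ PP q x t (B t) * ε ^ (k + 1) := by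
      intro t ht
      rw [Finset.mem_range] at ht
      have htm : t ≤ m := by omega
      refine mkv x htm (Es t) (B t)
        (fun z ω₂ => z ∉ M ∧ EE O M C (k + 1) (C + 1) z ω₂) ?_ (ε ^ (k + 1)) ?_
      · rintro ω₁ ω₂ ⟨hfirst, htM, hsurv, ts, hlb, hgap, hle, hM⟩
        have hyM : traj x ω₁ t ∉ M := by
          rwa [traj_glue_le htm x ω₁ ω₂ (le_refl t)] at htM
        have ht0 : t ≤ ts 0 := by
          by_contra hlt
          exact hM 0 (hfirst (ts 0) (by omega))
        refine ⟨⟨?_, hyM⟩, hyM, ?_, ⟨fun a => ts a.succ - t, ?_, ?_, ?_, ?_⟩⟩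
        · intro s hs
          rw [← traj_glue_le htm x ω₁ ω₂ (le_of_lt hs)]
          exact hfirst s hs
        · intro s hs
          rw [← traj_glue_ge htm x ω₁ ω₂ hs]
          exact hsurv (t + s) (by omega)
        · intro a
          dsimp only
          have h1 := hgap 0 a.succ (Fin.succ_pos a)
          omega
        · intro a b hab
          dsimp only
          have h1 := hgap a.succ b.succ (Fin.succ_lt_succ_iff.mpr hab)
          have h2 := hgap 0 a.succ (Fin.succ_pos a)
          omega
        · intro a
          dsimp only
          have := hle a.succ
          omega
        · intro a
          dsimp only
          have h1 := hgap 0 a.succ (Fin.succ_pos a)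
          have h2 := hle a.succ
          rw [← traj_glue_ge htm x ω₁ ω₂ (show ts a.succ - t ≤ m - t by omega),
            show t + (ts a.succ - t) = ts a.succ by omega]
          exact hM a.succ
      · intro z
        by_cases hz : z ∈ M
        · refine le_trans (le_of_eq (PP_eq_zero z (m - t) ?_)) zero_le
          rintro ω ⟨hzM, -⟩
          exact hzM hz
        · refine le_trans (PP_mono z (m - t) (fun ω hω => hω.2)) ?_
          exact claim2 hbad k ih z hz (m - t)
    have step3 : ∑ t ∈ Finset.range (m + 1), PP q x t (B t) ≤ 1 := by
      have hlift : ∀ t ∈ Finset.range (m + 1),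
          PP q x t (B t) = PP q x m (fun ω => (∀ s < t, traj x ω s ∈ M) ∧ traj x ω t ∉ M) := by
        intro t ht
        rw [Finset.mem_range] at ht
        have htm : t ≤ m := by omega
        rw [← PP_prefix hq x htm (B t)]
        refine PP_congr x m fun ω => ?_
        constructor
        · rintro ⟨h1, h2⟩
          refine ⟨fun s hs => ?_, ?_⟩
          · have h3 := h1 s hs
            rwa [traj_pref htm x ω (le_of_lt hs)] at h3
          · rwa [traj_pref htm x ω (le_refl t)] at h2
        · rintro ⟨h1, h2⟩
          refine ⟨fun s hs => ?_, ?_⟩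
          · rw [traj_pref htm x ω (le_of_lt hs)]
            exact h1 s hs
          · rwa [← traj_pref htm x ω (le_refl t)] at h2
      rw [Finset.sum_congr rfl hlift]
      refine disjoint_sum hq x m (Finset.range (m + 1))
        (fun t ω => (∀ s < t, traj x ω s ∈ M) ∧ traj x ω t ∉ M) ?_
      rintro ω t t' - - ⟨h1, h2⟩ ⟨h1', h2'⟩
      by_contra hne
      rcases Nat.lt_or_ge t t' with hlt | hge
      · exact h2 (h1' t hlt)
      · exact h2' (h1 t' (by omega))
    calc PP q x m E ≤ ∑ t ∈ Finset.range (m + 1), PP q x m (Es t) := step1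
      _ ≤ ∑ t ∈ Finset.range (m + 1), PP q x t (B t) * ε ^ (k + 1) :=
          Finset.sum_le_sum step2
      _ = (∑ t ∈ Finset.range (m + 1), PP q x t (B t)) * ε ^ (k + 1) :=
          (Finset.sum_mul _ _ _).symm
      _ ≤ 1 * ε ^ (k + 1) := mul_le_mul' step3 le_rfl
      _ = ε ^ (k + 1) := one_mul _

lemma ofReal_finset_prod {ι : Type*} (s : Finset ι) (f : ι → ℝ) (h : ∀ i ∈ s, 0 ≤ f i) :
    ENNReal.ofReal (∏ i ∈ s, f i) = ∏ i ∈ s, ENNReal.ofReal (f i) := by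
  induction s using Finset.cons_induction with
  | empty => simp
  | cons a s ha ih =>
    rw [Finset.prod_cons, Finset.prod_cons, ENNReal.ofReal_mul (h a (Finset.mem_cons_self a s)),
      ih (fun i hi => h i (Finset.mem_cons_of_mem hi))]

lemma pathProb_eq_range {p : V → V → ℝ} (x : V) {m : ℕ} (ω : Fin m → V) :
    pathProb p x ω = ∏ i ∈ Finset.range m, p (traj x ω i) (traj x ω (i + 1)) := by
  unfold pathProb
  rw [← Fin.prod_univ_eq_prod_range (fun i => p (traj x ω i) (traj x ω (i + 1))) m]
  refine Finset.prod_congr rfl fun i _ => ?_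
  have h1 : traj x ω ((i : ℕ) + 1) = ω i := by
    unfold traj
    rw [dif_pos ⟨by omega, by have := i.2; omega⟩]
    exact congrArg ω (Fin.ext (by simp))
  have h2 : traj x ω (i : ℕ) = if (i : ℕ) = 0 then x
      else ω ⟨(i : ℕ) - 1, lt_of_le_of_lt (Nat.sub_le _ _) i.isLt⟩ := by
    have him := i.2
    unfold traj
    split_ifs with ha hb <;> first | rfl | (exfalso; omega)
  rw [h1, h2]

lemma ofReal_pathProb {p : V → V → ℝ} (hp0 : ∀ x y, 0 ≤ p x y) (x : V) {m : ℕ}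
    (ω : Fin m → V) :
    ENNReal.ofReal (pathProb p x ω) = Wt (fun a b => ENNReal.ofReal (p a b)) x ω := by
  rw [pathProb_eq_range, Wt, ofReal_finset_prod _ _ (fun i _ => hp0 _ _)]

variable [Countable V]

lemma transfer {p : V → V → ℝ} (hp0 : ∀ x y, 0 ≤ p x y)
    (hq : ∀ x, ∑' y, ENNReal.ofReal (p x y) = 1) (x : V) (m : ℕ)
    (E : (Fin m → V) → Prop) :
    ENNReal.ofReal (walkP p x m E) = PP (fun a b => ENNReal.ofReal (p a b)) x m E := by
  set q : V → V → ℝ≥0∞ := fun a b => ENNReal.ofReal (p a b) with hqdef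
  set g : (Fin m → V) → ℝ := fun ω => if E ω then pathProb p x ω else 0 with hg
  have hg0 : ∀ ω, 0 ≤ g ω := by
    intro ω
    rw [hg]
    dsimp only
    split_ifs
    · exact Finset.prod_nonneg fun i _ => hp0 _ _
    · exact le_refl 0
  have hPPeq : PP q x m E = ∑' ω, ENNReal.ofReal (g ω) := by
    refine tsum_congr fun ω => ?_
    rw [hg]
    dsimp only
    split_ifs
    · exact (ofReal_pathProb hp0 x ω).symm
    · rw [ENNReal.ofReal_zero]
  have hfin : (∑' ω, ENNReal.ofReal (g ω)) ≠ ⊤ := by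
    rw [← hPPeq]
    exact (lt_of_le_of_lt (PP_le_one hq x m E) ENNReal.one_lt_top).ne
  have hsum : Summable g := by
    have h := ENNReal.summable_toReal hfin
    refine h.congr fun ω => ?_
    rw [ENNReal.toReal_ofReal (hg0 ω)]
  rw [hPPeq, walkP, ← hg, ENNReal.ofReal_tsum_of_nonneg hg0 hsum]

end Stmt12

/-- if from every state outside `M` the probability of surviving (avoiding the
obstacle set `O`) for `C` steps is at most `e^{−C/(log C)²}`, then the probability of surviving
`m` steps while there exist `j` times `ts 0 < ts 1 < ⋯`, each `> C`, with successive gaps `> C`,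
all `≤ m`, at which the chain is outside `M` (i.e. the event `{ζ_j ≤ m, τ > m}`) is at most
`(e^{−C/(log C)²})^{j−1}`. -/
theorem stmt12 {V : Type*} [Countable V] (p : V → V → ℝ)
    (hp0 : ∀ x y, 0 ≤ p x y) (hp1 : ∀ x, ∑' y, p x y = 1)
    (O M : Set V) (C : ℕ) (hC : 2 ≤ C)
    (hbad : ∀ x ∉ M, walkP p x C (fun ω => ∀ t ≤ C, traj x ω t ∉ O) ≤
      Real.exp (-(C : ℝ) / (Real.log C) ^ 2))
    (x0 : V) (j m : ℕ) (hj : 1 ≤ j) :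
    walkP p x0 m (fun ω =>
      (∀ t ≤ m, traj x0 ω t ∉ O) ∧
      ∃ ts : Fin j → ℕ, (∀ a : Fin j, C < ts a) ∧
        (∀ a b : Fin j, a < b → ts a + C < ts b) ∧
        (∀ a : Fin j, ts a ≤ m) ∧
        (∀ a : Fin j, traj x0 ω (ts a) ∉ M)) ≤
      Real.exp (-(C : ℝ) / (Real.log C) ^ 2) ^ (j - 1) := by
  classical
  set ε : ℝ := Real.exp (-(C : ℝ) / (Real.log C) ^ 2) with hε
  have hε0 : 0 ≤ ε := le_of_lt (Real.exp_pos _)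
  set q : V → V → ENNReal := fun a b => ENNReal.ofReal (p a b) with hqdef
  have hq : ∀ x, ∑' y, q x y = 1 := by
    intro x
    have hsum : Summable (p x) := by
      by_contra hns
      have h1x := hp1 x
      rw [tsum_eq_zero_of_not_summable hns] at h1x
      exact one_ne_zero h1x.symm
    rw [hqdef]
    dsimp only
    rw [← ENNReal.ofReal_tsum_of_nonneg (hp0 x) hsum, hp1 x, ENNReal.ofReal_one]
  have hbad' : ∀ y ∉ M, Stmt12.PP q y C (fun ω => ∀ t ≤ C, traj y ω t ∉ O) ≤
      ENNReal.ofReal ε := by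
    intro y hy
    rw [← Stmt12.transfer hp0 hq y C]
    exact ENNReal.ofReal_le_ofReal (hbad y hy)
  obtain ⟨k, rfl⟩ : ∃ k, j = k + 1 := ⟨j - 1, by omega⟩
  have hmain := Stmt12.claim3 hq hbad' k x0 m
  have hmono : Stmt12.PP q x0 m (fun ω =>
      (∀ t ≤ m, traj x0 ω t ∉ O) ∧
      ∃ ts : Fin (k + 1) → ℕ, (∀ a : Fin (k + 1), C < ts a) ∧
        (∀ a b : Fin (k + 1), a < b → ts a + C < ts b) ∧
        (∀ a : Fin (k + 1), ts a ≤ m) ∧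
        (∀ a : Fin (k + 1), traj x0 ω (ts a) ∉ M)) ≤
      Stmt12.PP q x0 m (Stmt12.EE O M C (k + 1) 0 x0) := by
    refine Stmt12.PP_mono x0 m ?_
    rintro ω ⟨hsurv, ts, hlt, hgap, hle, hM⟩
    exact ⟨hsurv, ts, fun a => Nat.zero_le _, hgap, hle, hM⟩
  have hfinal : ENNReal.ofReal (walkP p x0 m (fun ω =>
      (∀ t ≤ m, traj x0 ω t ∉ O) ∧
      ∃ ts : Fin (k + 1) → ℕ, (∀ a : Fin (k + 1), C < ts a) ∧
        (∀ a b : Fin (k + 1), a < b → ts a + C < ts b) ∧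
        (∀ a : Fin (k + 1), ts a ≤ m) ∧
        (∀ a : Fin (k + 1), traj x0 ω (ts a) ∉ M))) ≤ ENNReal.ofReal (ε ^ k) := by
    rw [Stmt12.transfer hp0 hq x0 m, ENNReal.ofReal_pow hε0]
    exact le_trans hmono hmain
  rw [show k + 1 - 1 = k from rfl, ← ENNReal.ofReal_le_ofReal_iff (pow_nonneg hε0 k)]
  exact hfinal
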